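/- arXiv:2207.11788 — 9 statements merged into one kernel-verified Lean document; each statement's English description precedes it below -/
import Mathlib

section
/- Let Q be a nonempty compact convex subset of [0,1]^d ⊆ ℝ^d. Then the squared Chebyshev radius of Q is bounded by the relaxed objective: inf_{x̂ ∈ ℝ^d} sup_{x ∈ Q} ‖x − x̂‖² ≤ sup_{x ∈ Q} (1_dᵀ x − ‖x‖²). -/
open scoped BigOperators RealInnerProductSpace

/-- For a nonempty compact convex `Q ⊆ [0,1]^d`, the squared Chebyshev radius of `Q`
is bounded above by the relaxed objective `sup_{x ∈ Q} (1ᵀx − ‖x‖²)`. -/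
theorem chebyshev_radius_sq_le_relaxed
    {d : ℕ} (Q : Set (EuclideanSpace ℝ (Fin d)))
    (hne : Q.Nonempty) (hcomp : IsCompact Q) (hconv : Convex ℝ Q)
    (hsub : ∀ x ∈ Q, ∀ i, x i ∈ Set.Icc (0 : ℝ) 1) :
    sInf {r : ℝ | ∃ xh : EuclideanSpace ℝ (Fin d),
        r = sSup ((fun x => ‖x - xh‖ ^ 2) '' Q)} ≤
      sSup ((fun x : EuclideanSpace ℝ (Fin d) => (∑ i, x i) - ‖x‖ ^ 2) '' Q) := by
  classical
  set f : EuclideanSpace ℝ (Fin d) → ℝ := fun x => (∑ i, x i) - ‖x‖ ^ 2 with hf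
  have hfc : Continuous f := by
    apply Continuous.sub
    · exact continuous_finset_sum _ fun i _ => (EuclideanSpace.proj i).continuous
    · exact continuous_norm.pow 2
  obtain ⟨xs, hxsQ, hmax⟩ := hcomp.exists_isMaxOn hne hfc.continuousOn
  -- norm squared = sum of squares bound
  have hnormsq : ∀ x : EuclideanSpace ℝ (Fin d), ‖x‖ ^ 2 = ∑ i, x i ^ 2 := by
    intro x
    rw [← real_inner_self_eq_norm_sq, PiLp.inner_apply]
    simp [sq, RCLike.inner_apply]
  -- first order condition
  have hfo : ∀ x ∈ Q, (∑ i, x i) - (∑ i, xs i) - 2 * ⟪xs, x - xs⟫ ≤ 0 := by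
    intro x hx
    set v : EuclideanSpace ℝ (Fin d) := x - xs with hv
    set c : ℝ := (∑ i, x i) - (∑ i, xs i) - 2 * ⟪xs, v⟫ with hc
    have key : ∀ t : ℝ, 0 ≤ t → t ≤ 1 → t * c ≤ t ^ 2 * ‖v‖ ^ 2 := by
      intro t ht0 ht1
      have hmem : xs + t • v ∈ Q := by
        have : xs + t • v = (1 - t) • xs + t • x := by
          simp only [hv]; module
        rw [this]
        exact hconv hxsQ hx (by linarith) ht0 (by ring)
      have hle : (∑ i, (xs + t • v) i) - ‖xs + t • v‖ ^ 2 ≤ (∑ i, xs i) - ‖xs‖ ^ 2 :=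
        hmax hmem
      have hsum : ∑ i, (xs + t • v) i = (∑ i, xs i) + t * ∑ i, v i := by
        rw [Finset.mul_sum, ← Finset.sum_add_distrib]
        refine Finset.sum_congr rfl fun i _ => ?_
        simp [PiLp.add_apply, PiLp.smul_apply, smul_eq_mul]
      have hnorm : ‖xs + t • v‖ ^ 2 = ‖xs‖ ^ 2 + 2 * (t * ⟪xs, v⟫) + t ^ 2 * ‖v‖ ^ 2 := by
        rw [norm_add_sq_real, real_inner_smul_right, norm_smul]
        simp [mul_pow, sq_abs]
      have hsumv : ∑ i, v i = (∑ i, x i) - ∑ i, xs i := by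
        rw [← Finset.sum_sub_distrib]
        refine Finset.sum_congr rfl fun i _ => ?_
        simp [hv, PiLp.sub_apply]
      rw [hsum, hnorm, hsumv] at hle
      rw [hc]
      nlinarith [hle]
    have hcle : c ≤ 0 := by
      by_contra h
      push_neg at h
      have hv2 : 0 < ‖v‖ ^ 2 := by
        rcases eq_or_lt_of_le (sq_nonneg ‖v‖) with he | hlt
        · exfalso
          have := key 1 zero_le_one le_rfl
          rw [← he] at this
          nlinarith
        · exact hlt
      set t : ℝ := min 1 (c / (2 * ‖v‖ ^ 2)) with htdef
      have ht0 : 0 < t := lt_min one_pos (by positivity)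
      have ht1 : t ≤ 1 := min_le_left _ _
      have := key t ht0.le ht1
      have htb : t ≤ c / (2 * ‖v‖ ^ 2) := min_le_right _ _
      have h2 : t * ‖v‖ ^ 2 ≤ c / 2 := by
        calc t * ‖v‖ ^ 2 ≤ (c / (2 * ‖v‖ ^ 2)) * ‖v‖ ^ 2 :=
              mul_le_mul_of_nonneg_right htb hv2.le
          _ = c / 2 := by rw [div_mul_eq_mul_div, mul_div_mul_right _ _ hv2.ne']
      nlinarith
    exact hcle
  -- main pointwise bound
  have hbound : ∀ x ∈ Q, ‖x - xs‖ ^ 2 ≤ f xs := by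
    intro x hx
    have h1 := hfo x hx
    have h2 : ⟪xs, x - xs⟫ = ⟪xs, x⟫ - ‖xs‖ ^ 2 := by
      rw [inner_sub_right, real_inner_self_eq_norm_sq]
    have h3 : ‖x - xs‖ ^ 2 = ‖x‖ ^ 2 - 2 * ⟪xs, x⟫ + ‖xs‖ ^ 2 := by
      rw [norm_sub_sq_real, real_inner_comm]
    have h4 : ‖x‖ ^ 2 ≤ ∑ i, x i := by
      rw [hnormsq]
      refine Finset.sum_le_sum fun i _ => ?_
      have := hsub x hx i
      nlinarith [this.1, this.2]
    simp only [hf]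
    rw [h2] at h1
    linarith [h3, h4, h1]
  -- assemble
  have himgbdd : ∀ xh : EuclideanSpace ℝ (Fin d),
      BddAbove ((fun x => ‖x - xh‖ ^ 2) '' Q) := fun xh =>
    (hcomp.image ((continuous_id.sub continuous_const).norm.pow 2)).bddAbove
  have hfbdd : BddAbove (f '' Q) := (hcomp.image hfc).bddAbove
  have hmem : sSup ((fun x => ‖x - xs‖ ^ 2) '' Q) ∈
      {r : ℝ | ∃ xh : EuclideanSpace ℝ (Fin d),
        r = sSup ((fun x => ‖x - xh‖ ^ 2) '' Q)} := ⟨xs, rfl⟩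
  have hbdbelow : BddBelow {r : ℝ | ∃ xh : EuclideanSpace ℝ (Fin d),
      r = sSup ((fun x => ‖x - xh‖ ^ 2) '' Q)} := by
    refine ⟨0, ?_⟩
    rintro r ⟨xh, rfl⟩
    obtain ⟨x0, hx0⟩ := hne
    exact le_trans (sq_nonneg ‖x0 - xh‖) (le_csSup (himgbdd xh) ⟨x0, hx0, rfl⟩)
  refine (csInf_le hbdbelow hmem).trans ?_
  refine csSup_le (hne.image _) ?_
  rintro _ ⟨x, hx, rfl⟩
  exact (hbound x hx).trans (le_csSup hfbdd ⟨xs, hxsQ, rfl⟩)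
end

section
/- Let A ∈ ℝ^{m×d}, let B ∈ ℝ^{d×m} be a Moore–Penrose pseudoinverse of A, let b ∈ ℝ^m, and suppose the feasible solution set S_F = {x ∈ [0,1]^d : Ax = b} is nonempty. Define the half* estimate h := Bb + (1/2)(I_d − BA)·1_d, and let p ∈ S_F be the (unique) point of the closed convex set S_F closest to h in Euclidean norm (the RCC2 estimate). Then for every x ∈ S_F one has ‖x − p‖² ≤ ‖x − h‖². Consequently, for any random vector X satisfying X ∈ S_F almost surely, E[‖X − p‖²] ≤ E[‖X − h‖²], i.e., MSE(X̂_RCC2) ≤ MSE(X̂_half*). -/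
open MeasureTheory Matrix

/-- RCC2 (the projection of the half* estimate onto the feasible set `S_F`)
outperforms the half* estimate pointwise on `S_F`, hence also in mean square error
for any random vector `X ∈ S_F` almost surely. -/
theorem rcc2_outperforms_halfstar
    {m d : ℕ} (A : Matrix (Fin m) (Fin d) ℝ) (B : Matrix (Fin d) (Fin m) ℝ)
    (h1 : A * B * A = A) (h2 : B * A * B = B)
    (h3 : (A * B)ᵀ = A * B) (h4 : (B * A)ᵀ = B * A)
    (b : Fin m → ℝ)
    (SF : Set (Fin d → ℝ))
    (hSF : SF = {x : Fin d → ℝ | (∀ i, x i ∈ Set.Icc (0 : ℝ) 1) ∧ A *ᵥ x = b})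
    (hne : SF.Nonempty)
    (h : Fin d → ℝ)
    (hh : h = B *ᵥ b + (2 : ℝ)⁻¹ • ((1 - B * A) *ᵥ (fun _ : Fin d => (1 : ℝ))))
    (p : Fin d → ℝ) (hpmem : p ∈ SF)
    (hclosest : ∀ y ∈ SF, ∑ i, (h i - p i) ^ 2 ≤ ∑ i, (h i - y i) ^ 2)
    {Ω : Type*} [MeasureSpace Ω] [IsProbabilityMeasure (volume : Measure Ω)]
    (X : Ω → Fin d → ℝ) (hXmeas : Measurable X) (hXmem : ∀ᵐ ω, X ω ∈ SF) :
    (∀ x ∈ SF, ∑ i, (x i - p i) ^ 2 ≤ ∑ i, (x i - h i) ^ 2) ∧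
      (∫ ω, ∑ i, (X ω i - p i) ^ 2) ≤ ∫ ω, ∑ i, (X ω i - h i) ^ 2 := by
  obtain ⟨hpIcc, hpA⟩ : (∀ i, p i ∈ Set.Icc (0:ℝ) 1) ∧ A *ᵥ p = b := by
    rw [hSF] at hpmem; exact hpmem
  -- pointwise claim
  have key : ∀ x ∈ SF, ∑ i, (x i - p i) ^ 2 ≤ ∑ i, (x i - h i) ^ 2 := by
    intro x hx
    obtain ⟨hxIcc, hxA⟩ : (∀ i, x i ∈ Set.Icc (0:ℝ) 1) ∧ A *ᵥ x = b := by
      rw [hSF] at hx; exact hx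
    set c : ℝ := ∑ i, (h i - p i) * (x i - p i) with hc
    set s : ℝ := ∑ i, (x i - p i) ^ 2 with hs
    -- variational inequality: for t ∈ (0,1], 2*t*c ≤ t^2 * s
    have hvar : ∀ t : ℝ, 0 < t → t ≤ 1 → 2 * t * c ≤ t ^ 2 * s := by
      intro t ht0 ht1
      have hymem : (fun i => p i + t * (x i - p i)) ∈ SF := by
        rw [hSF]
        constructor
        · intro i
          obtain ⟨hx0, hx1⟩ := hxIcc i
          obtain ⟨hp0, hp1⟩ := hpIcc i
          refine ⟨?_, ?_⟩ <;> simp only <;> nlinarith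
        · have : (fun i => p i + t * (x i - p i)) = p + t • (x - p) := by
            funext i
            simp only [Pi.add_apply, Pi.smul_apply, Pi.sub_apply, smul_eq_mul]
          rw [this, Matrix.mulVec_add, Matrix.mulVec_smul, Matrix.mulVec_sub,
            hxA, hpA]
          simp
      have hcl := hclosest _ hymem
      have expand : ∑ i, (h i - (p i + t * (x i - p i))) ^ 2
          = ∑ i, (h i - p i) ^ 2 - 2 * t * c + t ^ 2 * s := by
        rw [hc, hs, Finset.mul_sum, Finset.mul_sum]
        rw [← Finset.sum_sub_distrib, ← Finset.sum_add_distrib]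
        apply Finset.sum_congr rfl
        intro i _
        ring
      rw [expand] at hcl
      linarith
    have hcle : c ≤ 0 := by
      by_contra hcpos
      push_neg at hcpos
      have hs0 : 0 ≤ s := Finset.sum_nonneg fun i _ => sq_nonneg _
      rcases eq_or_lt_of_le hs0 with hseq | hslt
      · -- s = 0 ⇒ x = p ⇒ c = 0
        have hall : ∀ i ∈ Finset.univ, (x i - p i) ^ 2 = 0 := by
          intro i _
          have := (Finset.sum_eq_zero_iff_of_nonneg
            (fun i _ => sq_nonneg (x i - p i))).mp hseq.symm
          exact this i (Finset.mem_univ i)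
        have : c = 0 := by
          rw [hc]
          apply Finset.sum_eq_zero
          intro i _
          have := hall i (Finset.mem_univ i)
          have hxi : x i - p i = 0 := by
            have := sq_eq_zero_iff.mp this
            exact this
          rw [hxi, mul_zero]
        linarith
      · set t : ℝ := min 1 (c / s) with htdef
        have ht0 : 0 < t := lt_min one_pos (div_pos hcpos hslt)
        have ht1 : t ≤ 1 := min_le_left _ _
        have hts : t * s ≤ c := by
          have : t ≤ c / s := min_le_right _ _
          calc t * s ≤ (c / s) * s := by nlinarith
            _ = c := by field_simp
        have := hvar t ht0 ht1
        nlinarith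
    -- conclude
    have expand2 : ∑ i, (x i - h i) ^ 2
        = s + ∑ i, (p i - h i) ^ 2 - 2 * c := by
      rw [hc, hs, Finset.mul_sum, ← Finset.sum_add_distrib, ← Finset.sum_sub_distrib]
      apply Finset.sum_congr rfl
      intro i _
      ring
    have hph : 0 ≤ ∑ i, (p i - h i) ^ 2 := Finset.sum_nonneg fun i _ => sq_nonneg _
    rw [expand2]
    linarith
  refine ⟨key, ?_⟩
  -- integrability
  have hmeasf : ∀ (v : Fin d → ℝ), Measurable fun ω => ∑ i, (X ω i - v i) ^ 2 := by
    intro v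
    apply Finset.measurable_sum
    intro i _
    exact (((measurable_pi_apply i).comp hXmeas).sub measurable_const).pow_const 2
  have hintp : Integrable (fun ω => ∑ i, (X ω i - p i) ^ 2) := by
    apply Integrable.mono' (integrable_const (d : ℝ)) (hmeasf p).aestronglyMeasurable
    filter_upwards [hXmem] with ω hω
    obtain ⟨hIcc, _⟩ : (∀ i, X ω i ∈ Set.Icc (0:ℝ) 1) ∧ A *ᵥ X ω = b := by
      rw [hSF] at hω; exact hω
    have h1 : ∑ i, (X ω i - p i) ^ 2 ≤ ∑ i : Fin d, (1:ℝ) := by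
      apply Finset.sum_le_sum
      intro i _
      obtain ⟨ha0, ha1⟩ := hIcc i
      obtain ⟨hb0, hb1⟩ := hpIcc i
      nlinarith
    have h0 : 0 ≤ ∑ i, (X ω i - p i) ^ 2 := Finset.sum_nonneg fun i _ => sq_nonneg _
    rw [Real.norm_eq_abs, abs_of_nonneg h0]
    simpa using h1
  have hinth : Integrable (fun ω => ∑ i, (X ω i - h i) ^ 2) := by
    apply Integrable.mono' (integrable_const (∑ i, (1 + |h i|) ^ 2))
      (hmeasf h).aestronglyMeasurable
    filter_upwards [hXmem] with ω hω
    obtain ⟨hIcc, _⟩ : (∀ i, X ω i ∈ Set.Icc (0:ℝ) 1) ∧ A *ᵥ X ω = b := by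
      rw [hSF] at hω; exact hω
    have h1 : ∑ i, (X ω i - h i) ^ 2 ≤ ∑ i, (1 + |h i|) ^ 2 := by
      apply Finset.sum_le_sum
      intro i _
      obtain ⟨ha0, ha1⟩ := hIcc i
      have := abs_nonneg (h i)
      have h2 := le_abs_self (h i)
      have h3 := neg_abs_le (h i)
      nlinarith
    have h0 : 0 ≤ ∑ i, (X ω i - h i) ^ 2 := Finset.sum_nonneg fun i _ => sq_nonneg _
    rw [Real.norm_eq_abs, abs_of_nonneg h0]
    exact h1
  apply integral_mono_ae hintp hinth
  filter_upwards [hXmem] with ω hω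
  exact key _ hω
end

section
/- Let A ∈ ℝ^{m×d}, let B ∈ ℝ^{d×m} be a Moore–Penrose pseudoinverse of A, let b ∈ ℝ^m, and let h := Bb + (1/2)(I_d − BA)·1_d. Then for every x ∈ ℝ^d with Ax = b, the vectors x − h and h − (1/2)·1_d are orthogonal, and consequently ‖x − (1/2)·1_d‖² = ‖x − h‖² + ‖h − (1/2)·1_d‖² ≥ ‖x − h‖². Hence for any random vector X with AX = b almost surely, E[‖X − h‖²] ≤ E[‖X − (1/2)·1_d‖²], i.e., MSE(X̂_half*) ≤ MSE(X̂_half). -/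
open MeasureTheory Matrix

/-- For `h = Bb + (1/2)(I − BA)·1` and any solution `x` of `Ax = b`, the vectors
`x − h` and `h − (1/2)·1` are orthogonal, giving the Pythagorean identity and
`‖x − h‖² ≤ ‖x − (1/2)·1‖²`; hence MSE(half*) ≤ MSE(half) for `X` with `AX = b` a.s. -/
theorem halfstar_outperforms_half
    {m d : ℕ} (A : Matrix (Fin m) (Fin d) ℝ) (B : Matrix (Fin d) (Fin m) ℝ)
    (h1 : A * B * A = A) (h2 : B * A * B = B)
    (h3 : (A * B)ᵀ = A * B) (h4 : (B * A)ᵀ = B * A)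
    (b : Fin m → ℝ)
    (h : Fin d → ℝ)
    (hh : h = B *ᵥ b + (2 : ℝ)⁻¹ • ((1 - B * A) *ᵥ (fun _ : Fin d => (1 : ℝ))))
    {Ω : Type*} [MeasureSpace Ω] [IsProbabilityMeasure (volume : Measure Ω)]
    (X : Ω → Fin d → ℝ) (hXmeas : Measurable X) (hX : ∀ᵐ ω, A *ᵥ X ω = b) :
    (∀ x : Fin d → ℝ, A *ᵥ x = b →
        (∑ i, (x i - h i) * (h i - 1 / 2) = 0) ∧
        (∑ i, (x i - 1 / 2) ^ 2 = ∑ i, (x i - h i) ^ 2 + ∑ i, (h i - 1 / 2) ^ 2) ∧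
        (∑ i, (x i - h i) ^ 2 ≤ ∑ i, (x i - 1 / 2) ^ 2)) ∧
      (∫ ω, ∑ i, (X ω i - h i) ^ 2) ≤ ∫ ω, ∑ i, (X ω i - 1 / 2) ^ 2 := by
  classical
  set one : Fin d → ℝ := fun _ : Fin d => (1 : ℝ) with hone
  have hBABA : B * A * (B * A) = B * A := by
    rw [← Matrix.mul_assoc, h2]
  -- BA h = B b
  have hBAh : (B * A) *ᵥ h = B *ᵥ b := by
    rw [hh, mulVec_add, mulVec_smul]
    have e1 : (B * A) *ᵥ (B *ᵥ b) = B *ᵥ b := by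
      rw [mulVec_mulVec, h2]
    have e2 : (B * A) *ᵥ ((1 - B * A) *ᵥ one) = 0 := by
      rw [mulVec_mulVec, mul_sub, mul_one, hBABA, sub_self, zero_mulVec]
    rw [e1, e2, smul_zero, add_zero]
  have hv : (fun i => h i - 1 / 2) =
      (B * A) *ᵥ (B *ᵥ (b - (2 : ℝ)⁻¹ • (A *ᵥ one))) := by
    rw [mulVec_mulVec, h2]
    funext i
    rw [hh]
    simp [mulVec_sub, mulVec_smul, sub_mulVec, one_mulVec, mulVec_mulVec, hone,
      Matrix.one_apply]
    ring
  have horth : ∀ x : Fin d → ℝ, A *ᵥ x = b →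
      ∑ i, (x i - h i) * (h i - 1 / 2) = 0 := by
    intro x hx
    have hu : (B * A) *ᵥ (x - h) = 0 := by
      rw [mulVec_sub, hBAh, ← mulVec_mulVec, hx, sub_self]
    have : ∑ i, (x i - h i) * (h i - 1 / 2)
        = (x - h) ⬝ᵥ ((B * A) *ᵥ (B *ᵥ (b - (2 : ℝ)⁻¹ • (A *ᵥ one)))) := by
      rw [← hv]; rfl
    rw [this, dotProduct_mulVec, ← mulVec_transpose, h4, hu, zero_dotProduct]
  have hpy : ∀ x : Fin d → ℝ, A *ᵥ x = b →
      ∑ i, (x i - 1 / 2) ^ 2 = ∑ i, (x i - h i) ^ 2 + ∑ i, (h i - 1 / 2) ^ 2 := by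
    intro x hx
    have key : ∀ i, (x i - 1 / 2) ^ 2
        = (x i - h i) ^ 2 + (h i - 1 / 2) ^ 2 + 2 * ((x i - h i) * (h i - 1 / 2)) := by
      intro i; ring
    rw [Finset.sum_congr rfl (fun i _ => key i), Finset.sum_add_distrib,
      Finset.sum_add_distrib, ← Finset.mul_sum, horth x hx]
    ring
  refine ⟨fun x hx => ⟨horth x hx, hpy x hx, ?_⟩, ?_⟩
  · have : (0:ℝ) ≤ ∑ i, (h i - 1 / 2) ^ 2 :=
      Finset.sum_nonneg fun i _ => sq_nonneg _
    rw [hpy x hx]; linarith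
  · -- integral part
    set c : ℝ := ∑ i, (h i - 1 / 2) ^ 2 with hc
    have hc0 : 0 ≤ c := Finset.sum_nonneg fun i _ => sq_nonneg _
    have hae : (fun ω => ∑ i, (X ω i - 1 / 2) ^ 2)
        =ᵐ[volume] fun ω => (∑ i, (X ω i - h i) ^ 2) + c := by
      filter_upwards [hX] with ω hω
      exact hpy (X ω) hω
    rw [integral_congr_ae hae]
    by_cases hint : Integrable (fun ω => ∑ i, (X ω i - h i) ^ 2) volume
    · rw [integral_add hint (integrable_const c), integral_const]
      simp only [measure_univ, probReal_univ, ENNReal.toReal_one, one_smul, smul_eq_mul, one_mul]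
      linarith
    · rw [integral_undef hint, integral_undef]
      intro hcon
      refine hint ((hcon.sub (integrable_const c)).congr ?_)
      exact Filter.Eventually.of_forall fun ω => by simp
end

section
/- Let A ∈ ℝ^{m×d} and let B ∈ ℝ^{d×m} be a Moore–Penrose pseudoinverse of A. Let X be a random vector in ℝ^d with E[‖X‖²] < ∞, and define K₀ := E[XXᵀ] and K_{½1} := E[(X − (1/2)·1_d)(X − (1/2)·1_d)ᵀ]. Then E[‖X − BAX‖²] = Tr((I_d − BA) K₀) and E[‖X − (BAX + (1/2)(I_d − BA)·1_d)‖²] = Tr((I_d − BA) K_{½1}). (These are the exact mean square errors of the least-squares attack X̂_LS = B(AX) and the half* attack X̂_half* = B(AX) + (1/2)(I − BA)·1_d, respectively, up to the factor 1/d.) -/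
open MeasureTheory Matrix

lemma aux_int {Ω : Type*} [MeasureSpace Ω] {f g : Ω → ℝ}
    (hf : MemLp f 2) (hg : MemLp g 2) :
    Integrable (fun ω => f ω * g ω) := by
  have h := hf.smul (r := 1) hg
  rw [memLp_one_iff_integrable] at h
  exact h.congr (by filter_upwards with ω using by simp [smul_eq_mul, mul_comm])

lemma aux_main {d : ℕ} {Ω : Type*} [MeasureSpace Ω]
    (P : Matrix (Fin d) (Fin d) ℝ) (hPP : P * P = P) (hPt : Pᵀ = P)
    (Y : Ω → Fin d → ℝ) (hY : ∀ i, MemLp (fun ω => Y ω i) 2) :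
    (∫ ω, ∑ i, ((P *ᵥ Y ω) i) ^ 2) =
      Matrix.trace (P * Matrix.of fun i j => ∫ ω, Y ω i * Y ω j) := by
  have key : ∀ ω, ∑ i, ((P *ᵥ Y ω) i) ^ 2 = ∑ j, ∑ k, P j k * (Y ω j * Y ω k) := by
    intro ω
    have h1 : ∑ i, ((P *ᵥ Y ω) i) ^ 2 = ∑ j, ∑ k, (∑ i, P i j * P i k) * (Y ω j * Y ω k) := by
      simp only [mulVec, dotProduct, sq, Finset.sum_mul, Finset.mul_sum]
      rw [Finset.sum_comm]
      congr 1; ext j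
      rw [Finset.sum_comm]
      congr 1; ext k
      congr 1; ext i
      ring
    rw [h1]
    congr 1; ext j; congr 1; ext k
    have h2 : ∑ i, P i j * P i k = (Pᵀ * P) j k := by
      simp [Matrix.mul_apply, Matrix.transpose_apply]
    rw [h2, hPt, hPP]
  simp_rw [key]
  have hint : ∀ j k : Fin d, Integrable (fun ω => P j k * (Y ω j * Y ω k)) :=
    fun j k => (aux_int (hY j) (hY k)).const_mul _
  rw [integral_finset_sum _ fun j _ => integrable_finset_sum _ fun k _ => hint j k]
  have hswap : ∀ j : Fin d, (∫ ω, ∑ k, P j k * (Y ω j * Y ω k)) =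
      ∑ k, P j k * ∫ ω, Y ω j * Y ω k := by
    intro j
    rw [integral_finset_sum _ fun k _ => hint j k]
    exact Finset.sum_congr rfl fun k _ => integral_const_mul _ _
  simp_rw [hswap]
  simp only [Matrix.trace, Matrix.diag, Matrix.mul_apply, Matrix.of_apply]
  refine Finset.sum_congr rfl fun j _ => Finset.sum_congr rfl fun k _ => ?_
  simp [mul_comm]

/-- Exact mean square errors (up to the factor `1/d`) of the least-squares attack
`X̂_LS = BAX` and the half* attack `X̂_half* = BAX + (1/2)(I − BA)·1`:
`E‖X − BAX‖² = Tr((I − BA)K₀)` and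
`E‖X − (BAX + (1/2)(I−BA)1)‖² = Tr((I − BA)K_{½1})`. -/
theorem mse_ls_and_halfstar_closed_form
    {m d : ℕ} (A : Matrix (Fin m) (Fin d) ℝ) (B : Matrix (Fin d) (Fin m) ℝ)
    (h1 : A * B * A = A) (h2 : B * A * B = B)
    (h3 : (A * B)ᵀ = A * B) (h4 : (B * A)ᵀ = B * A)
    {Ω : Type*} [MeasureSpace Ω] [IsProbabilityMeasure (volume : Measure Ω)]
    (X : Ω → Fin d → ℝ) (hXmeas : Measurable X)
    (hL2 : ∀ i, MemLp (fun ω => X ω i) 2)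
    (K₀ Khalf : Matrix (Fin d) (Fin d) ℝ)
    (hK₀ : K₀ = Matrix.of fun i j => ∫ ω, X ω i * X ω j)
    (hKhalf : Khalf = Matrix.of fun i j => ∫ ω, (X ω i - 1 / 2) * (X ω j - 1 / 2)) :
    (∫ ω, ∑ i, (X ω i - ((B * A) *ᵥ X ω) i) ^ 2) =
        Matrix.trace ((1 - B * A) * K₀) ∧
      (∫ ω, ∑ i, (X ω i -
            (((B * A) *ᵥ X ω + (2 : ℝ)⁻¹ • ((1 - B * A) *ᵥ (fun _ : Fin d => (1 : ℝ)))
              : Fin d → ℝ)) i) ^ 2) =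
        Matrix.trace ((1 - B * A) * Khalf) := by
  set P : Matrix (Fin d) (Fin d) ℝ := 1 - B * A with hP
  have hBA : (B * A) * (B * A) = B * A := by
    rw [← Matrix.mul_assoc (B * A) B A, h2]
  have hPP : P * P = P := by
    rw [hP, sub_mul, one_mul, mul_sub, mul_one, hBA]
    abel
  have hPt : Pᵀ = P := by
    rw [hP, Matrix.transpose_sub, Matrix.transpose_one, h4]
  constructor
  · have hrw : ∀ ω (i : Fin d), X ω i - ((B * A) *ᵥ X ω) i = (P *ᵥ X ω) i := by
      intro ω i
      rw [hP, Matrix.sub_mulVec, Matrix.one_mulVec]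
      simp
    simp_rw [hrw]
    rw [aux_main P hPP hPt X hL2, hK₀]
  · have hrw : ∀ ω (i : Fin d),
        X ω i - (((B * A) *ᵥ X ω + (2 : ℝ)⁻¹ • (P *ᵥ (fun _ : Fin d => (1 : ℝ)))
          : Fin d → ℝ)) i
        = (P *ᵥ (fun j => X ω j - 1 / 2)) i := by
      intro ω i
      have hv : (fun j => X ω j - 1 / 2) = X ω - (2 : ℝ)⁻¹ • (fun _ : Fin d => (1 : ℝ)) := by
        funext j; simp
      rw [hv, Matrix.mulVec_sub, Matrix.mulVec_smul, hP]
      simp only [Matrix.sub_mulVec, Matrix.one_mulVec, Pi.add_apply, Pi.sub_apply,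
        Pi.smul_apply, smul_eq_mul]
      ring
    simp_rw [hrw]
    rw [aux_main P hPP hPt (fun ω j => X ω j - 1 / 2)
      (fun i => (hL2 i).sub (memLp_const _)), hKhalf]
end

section
/- Let ω ∈ ℝ with ω ≠ 0, let N ≥ 1, and let x₁, …, x_N ∈ [0,1], not all zero. Define v_i := ω x_i for i ∈ [N], let M ∈ [N] be an index maximizing |v_i| (so v_M ≠ 0), and define the estimates x̂_i := v_i / v_M for i ∈ [N]. Then the empirical mean square error satisfies (1/N) ∑_{i=1}^{N} (x_i − x̂_i)² ≤ (x_M − 1)². -/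
/-- Black-box attack with one feature and zero bias: observing `v_i = ω x_i` with
`ω ≠ 0` and `x` not identically zero, taking `M` maximizing `|v_i|` and estimating
`x̂_i = v_i / v_M`, the empirical MSE satisfies
`(1/N) ∑ (x_i − x̂_i)² ≤ (x_M − 1)²` (and `v_M ≠ 0`). -/
theorem blackbox_zero_bias_mse_bound
    {N : ℕ} (hN : 1 ≤ N) (w : ℝ) (hw : w ≠ 0)
    (x : Fin N → ℝ) (hx : ∀ i, x i ∈ Set.Icc (0 : ℝ) 1) (hnz : ∃ i, x i ≠ 0)
    (M : Fin N) (hM : ∀ i, |w * x i| ≤ |w * x M|) :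
    w * x M ≠ 0 ∧
      (1 / (N : ℝ)) * ∑ i, (x i - (w * x i) / (w * x M)) ^ 2 ≤ (x M - 1) ^ 2 := by
  obtain ⟨j, hj⟩ := hnz
  have habs : ∀ i, |x i| ≤ |x M| := by
    intro i
    have := hM i
    rw [abs_mul, abs_mul] at this
    exact le_of_mul_le_mul_left this (abs_pos.mpr hw)
  have hxM : x M ≠ 0 := by
    intro h
    have := habs j
    rw [h, abs_zero, abs_nonpos_iff] at this
    exact hj this
  have hvM : w * x M ≠ 0 := mul_ne_zero hw hxM
  refine ⟨hvM, ?_⟩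
  have hterm : ∀ i, (x i - (w * x i) / (w * x M)) ^ 2 ≤ (x M - 1) ^ 2 := by
    intro i
    have heq : x i - (w * x i) / (w * x M) = x i * (x M - 1) / x M := by
      field_simp
    rw [heq, div_pow, mul_pow, div_le_iff₀ (by positivity : (0:ℝ) < x M ^ 2)]
    have hsq : x i ^ 2 ≤ x M ^ 2 := by
      have := sq_abs (x i); have := sq_abs (x M)
      nlinarith [habs i, abs_nonneg (x i), abs_nonneg (x M)]
    nlinarith [sq_nonneg (x M - 1)]
  have hsum : ∑ i, (x i - (w * x i) / (w * x M)) ^ 2 ≤ (N : ℝ) * (x M - 1) ^ 2 := by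
    calc ∑ i, (x i - (w * x i) / (w * x M)) ^ 2 ≤ ∑ _i : Fin N, (x M - 1) ^ 2 :=
          Finset.sum_le_sum fun i _ => hterm i
      _ = (N : ℝ) * (x M - 1) ^ 2 := by simp [mul_comm]
  have hNpos : (0 : ℝ) < N := by exact_mod_cast hN
  rw [div_mul_eq_mul_div, one_mul, div_le_iff₀ hNpos]
  linarith [hsum]
end

section
/- Let (X_i)_{i≥1} be i.i.d. random variables with values in [0,1] whose common CDF F satisfies 0 < F(α) < 1 for all α ∈ (0,1), and let ω ≠ 0. For each N, let V_i = ω X_i, let M be an index in [N] maximizing |V_i|, and define X̂_i := V_i / V_M if V_M ≠ 0 and X̂_i := 0 otherwise. Then for every ε > 0, lim_{N→∞} P( (1/N) ∑_{i=1}^{N} (X_i − X̂_i)² ≥ ε ) = 0; that is, the empirical mean square error of the adversary converges in probability to 0 as the number of predictions N grows. -/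
open MeasureTheory ProbabilityTheory Filter

/-- Black-box attack with one feature and zero bias, i.i.d. samples: the adversary
observes `V_i = ω X_i` (`ω ≠ 0` unknown), picks `M` maximizing `|V_i|` over `i ∈ [N]`,
and estimates `X̂_i = V_i / V_M` (`X̂_i = 0` when `V_M = 0`, as given by division by
zero). Then the empirical MSE converges in probability to `0` as `N → ∞`. -/
theorem blackbox_zero_bias_mse_tendsto_zero
    {Ω : Type*} [MeasureSpace Ω] [IsProbabilityMeasure (volume : Measure Ω)]
    (X : ℕ → Ω → ℝ) (hmeas : ∀ i, Measurable (X i))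
    (hindep : iIndepFun X)
    (hident : ∀ i, IdentDistrib (X i) (X 1))
    (hrange : ∀ i ω, X i ω ∈ Set.Icc (0 : ℝ) 1)
    (hF : ∀ α ∈ Set.Ioo (0 : ℝ) 1,
      0 < volume {ω | X 1 ω ≤ α} ∧ volume {ω | X 1 ω ≤ α} < 1)
    (w : ℝ) (hw : w ≠ 0)
    (M : ℕ → Ω → ℕ)
    (hMmem : ∀ N ω, 1 ≤ N → M N ω ∈ Finset.Icc 1 N)
    (hMmax : ∀ N ω, ∀ i ∈ Finset.Icc 1 N, |w * X i ω| ≤ |w * X (M N ω) ω|) :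
    ∀ ε > (0 : ℝ),
      Tendsto
        (fun N : ℕ => volume {ω | ε ≤ (1 / (N : ℝ)) *
          ∑ i ∈ Finset.Icc 1 N, (X i ω - (w * X i ω) / (w * X (M N ω) ω)) ^ 2})
        atTop (nhds 0) := by
  intro ε hε
  set β : ℝ := max (1 - Real.sqrt ε) (1 / 2) with hβdef
  have hβ0 : (0 : ℝ) < β := lt_of_lt_of_le (by norm_num) (le_max_right _ _)
  have hβ1 : β < 1 := by
    apply max_lt
    · have := Real.sqrt_pos.mpr hε; linarith
    · norm_num
  obtain ⟨hp0, hp1⟩ := hF β ⟨hβ0, hβ1⟩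
  set p : ENNReal := volume {ω | X 1 ω ≤ β} with hpdef
  -- pointwise subset claim
  have hsub : ∀ N : ℕ,
      {ω | ε ≤ (1 / (N : ℝ)) *
        ∑ i ∈ Finset.Icc 1 N, (X i ω - (w * X i ω) / (w * X (M N ω) ω)) ^ 2}
      ⊆ ⋂ i ∈ Finset.Icc 1 N, X i ⁻¹' Set.Iic β := by
    intro N ω hω
    simp only [Set.mem_setOf_eq] at hω
    simp only [Set.mem_iInter, Set.mem_preimage, Set.mem_Iic]
    intro i hi
    have hN1 : 1 ≤ N := le_trans (Finset.mem_Icc.mp hi).1 (Finset.mem_Icc.mp hi).2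
    set m : ℝ := X (M N ω) ω with hmdef
    have hm0 : 0 ≤ m := (hrange _ ω).1
    have hm1 : m ≤ 1 := (hrange _ ω).2
    have hle : ∀ j ∈ Finset.Icc 1 N, X j ω ≤ m := by
      intro j hj
      have h := hMmax N ω j hj
      rw [abs_mul, abs_mul] at h
      have h' : |X j ω| ≤ |m| := le_of_mul_le_mul_left h (abs_pos.mpr hw)
      rwa [abs_of_nonneg (hrange j ω).1, abs_of_nonneg hm0] at h'
    by_cases hm : m = 0
    · exfalso
      have hsum : ∀ j ∈ Finset.Icc 1 N,
          (X j ω - (w * X j ω) / (w * m)) ^ 2 = 0 := by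
        intro j hj
        have hXj0 : X j ω = 0 := le_antisymm (hm ▸ hle j hj) (hrange j ω).1
        simp [hXj0, hm]
      rw [Finset.sum_congr rfl hsum] at hω
      simp only [Finset.sum_const_zero, mul_zero] at hω
      linarith
    · have hmpos : 0 < m := lt_of_le_of_ne hm0 (Ne.symm hm)
      -- each term is at most (1 - m)^2
      have hterm : ∀ j ∈ Finset.Icc 1 N,
          (X j ω - (w * X j ω) / (w * m)) ^ 2 ≤ (1 - m) ^ 2 := by
        intro j hj
        have hdiv : (w * X j ω) / (w * m) = X j ω / m := by
          rw [mul_div_mul_left _ _ hw]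
        rw [hdiv]
        have hXj0 : 0 ≤ X j ω := (hrange j ω).1
        have hXjm : X j ω ≤ m := hle j hj
        rw [div_eq_mul_inv]
        have key : (X j ω - X j ω * m⁻¹) ^ 2 ≤ (1 - m) ^ 2 := by
          have hminv : m * m⁻¹ = 1 := mul_inv_cancel₀ hm
          have h1 : X j ω - X j ω * m⁻¹ = (X j ω * (m - 1)) * m⁻¹ := by
            field_simp
          rw [h1]
          rw [mul_pow, mul_pow]
          have h2 : (X j ω) ^ 2 * (m - 1) ^ 2 ≤ m ^ 2 * (m - 1) ^ 2 := by
            have : (X j ω) ^ 2 ≤ m ^ 2 := by nlinarith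
            nlinarith [sq_nonneg (m - 1)]
          calc (X j ω) ^ 2 * (m - 1) ^ 2 * (m⁻¹) ^ 2
              ≤ m ^ 2 * (m - 1) ^ 2 * (m⁻¹) ^ 2 := by
                apply mul_le_mul_of_nonneg_right h2 (sq_nonneg _)
            _ = (m - 1) ^ 2 * (m * m⁻¹) ^ 2 := by ring
            _ = (1 - m) ^ 2 := by rw [hminv]; ring
        exact key
      have hsumle : ∑ i ∈ Finset.Icc 1 N, (X i ω - (w * X i ω) / (w * m)) ^ 2
          ≤ (N : ℝ) * (1 - m) ^ 2 := by
        calc ∑ i ∈ Finset.Icc 1 N, (X i ω - (w * X i ω) / (w * m)) ^ 2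
            ≤ ∑ _i ∈ Finset.Icc 1 N, (1 - m) ^ 2 := Finset.sum_le_sum hterm
          _ = (N : ℝ) * (1 - m) ^ 2 := by
              rw [Finset.sum_const, Nat.card_Icc]; simp
      have hNpos : (0 : ℝ) < N := by exact_mod_cast hN1
      have hεle : ε ≤ (1 - m) ^ 2 := by
        have h1 : (1 / (N : ℝ)) *
            ∑ i ∈ Finset.Icc 1 N, (X i ω - (w * X i ω) / (w * m)) ^ 2
            ≤ (1 / (N : ℝ)) * ((N : ℝ) * (1 - m) ^ 2) := by
          apply mul_le_mul_of_nonneg_left hsumle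
          positivity
        have h2 : (1 / (N : ℝ)) * ((N : ℝ) * (1 - m) ^ 2) = (1 - m) ^ 2 := by
          field_simp
        linarith
      have hsq : Real.sqrt ε ≤ 1 - m := by
        have := Real.sqrt_le_sqrt hεle
        rwa [Real.sqrt_sq (by linarith : (0 : ℝ) ≤ 1 - m)] at this
      have hmβ : m ≤ β := le_trans (by linarith) (le_max_left _ _)
      exact le_trans (hle i hi) hmβ
  -- measure of the intersection is p ^ N
  have hprod : ∀ N : ℕ,
      volume (⋂ i ∈ Finset.Icc 1 N, X i ⁻¹' Set.Iic β) = p ^ N := by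
    intro N
    have := hindep.measure_inter_preimage_eq_mul (Finset.Icc 1 N)
      (sets := fun _ => Set.Iic β) (fun i _ => measurableSet_Iic)
    rw [this]
    have heach : ∀ i ∈ Finset.Icc 1 N, volume (X i ⁻¹' Set.Iic β) = p := by
      intro i _
      have := (hident i).measure_mem_eq (measurableSet_Iic (a := β))
      rw [hpdef]
      exact this
    rw [Finset.prod_congr rfl heach, Finset.prod_const, Nat.card_Icc]
    simp
  -- squeeze
  have hlim : Tendsto (fun N : ℕ => p ^ N) atTop (nhds 0) :=
    ENNReal.tendsto_pow_atTop_nhds_zero_of_lt_one hp1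
  apply tendsto_of_tendsto_of_tendsto_of_le_of_le tendsto_const_nhds hlim
    (fun N => zero_le)
  intro N
  calc volume {ω | ε ≤ (1 / (N : ℝ)) *
        ∑ i ∈ Finset.Icc 1 N, (X i ω - (w * X i ω) / (w * X (M N ω) ω)) ^ 2}
      ≤ volume (⋂ i ∈ Finset.Icc 1 N, X i ⁻¹' Set.Iic β) := measure_mono (hsub N)
    _ = p ^ N := hprod N
end

section
/- Let ω, b ∈ ℝ with ωb > 0, let N ≥ 1, and let x₁, …, x_N ∈ [0,1]. Define v_i := ω x_i + b for i ∈ [N]; let M be an index maximizing |v_i| and m an index minimizing |v_i| (equivalently, x_M = max_i x_i and x_m = min_i x_i). Let I := {i ∈ [N] : v_i ≠ v_m}, and for i ∈ I define α_i := (v_i − v_M)/(v_i − v_m). Define the estimates x̂_i := 1/(1 − α_i) for i ∈ I and x̂_i := 0 for i ∈ [N] \ I. Then α_i ≤ 0 for all i ∈ I, and the empirical mean square error satisfies (1/N) ∑_{i=1}^{N} (x_i − x̂_i)² ≤ (x_M − 1)² + x_m². -/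
lemma key_bound (xm xM xi : ℝ) (h0 : 0 ≤ xm) (h1 : xM ≤ 1)
    (hmi : xm < xi) (hiM : xi ≤ xM) :
    (xi - (xi - xm) / (xM - xm)) ^ 2 ≤ (xM - 1) ^ 2 + xm ^ 2 := by
  have hd : 0 < xM - xm := by linarith
  have hub : xi - (xi - xm) / (xM - xm) ≤ xm := by
    have : (xi - xm) ≤ (xi - xm) / (xM - xm) := by
      rw [le_div_iff₀ hd]; nlinarith
    linarith
  have hlb : xM - 1 ≤ xi - (xi - xm) / (xM - xm) := by
    have : (xi - xm) / (xM - xm) ≤ xi - xM + 1 := by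
      rw [div_le_iff₀ hd]; nlinarith
    linarith
  set e := xi - (xi - xm) / (xM - xm)
  rcases le_or_gt 0 e with h | h
  · nlinarith [mul_self_le_mul_self h hub, sq_nonneg (xM - 1)]
  · nlinarith [mul_self_le_mul_self (show (0:ℝ) ≤ -e by linarith)
      (show -e ≤ 1 - xM by linarith), sq_nonneg xm]

/-- Black-box attack with one feature, same-sign parameters (`ωb > 0`): with
`v_i = ω x_i + b`, `M` maximizing `|v_i|`, `m` minimizing `|v_i|`,
`α_i = (v_i − v_M)/(v_i − v_m)` for `v_i ≠ v_m`, and estimates `x̂_i = 1/(1 − α_i)`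
(`x̂_i = 0` for `v_i = v_m`): every `α_i ≤ 0` and the empirical MSE satisfies
`(1/N) ∑ (x_i − x̂_i)² ≤ (x_M − 1)² + x_m²`. -/
theorem blackbox_same_sign_mse_bound
    {N : ℕ} (hN : 1 ≤ N) (w b : ℝ) (hwb : 0 < w * b)
    (x : Fin N → ℝ) (hx : ∀ i, x i ∈ Set.Icc (0 : ℝ) 1)
    (M mIdx : Fin N)
    (hM : ∀ i, |w * x i + b| ≤ |w * x M + b|)
    (hm : ∀ i, |w * x mIdx + b| ≤ |w * x i + b|) :
    (∀ i, w * x i + b ≠ w * x mIdx + b →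
        ((w * x i + b) - (w * x M + b)) / ((w * x i + b) - (w * x mIdx + b)) ≤ 0) ∧
      (1 / (N : ℝ)) * ∑ i, (x i -
          (if w * x i + b ≠ w * x mIdx + b then
            1 / (1 - ((w * x i + b) - (w * x M + b)) / ((w * x i + b) - (w * x mIdx + b)))
          else 0)) ^ 2 ≤
        (x M - 1) ^ 2 + (x mIdx) ^ 2 := by
  have hwne : w ≠ 0 := by
    rcases mul_pos_iff.mp hwb with ⟨hw, _⟩ | ⟨hw, _⟩
    · exact hw.ne'
    · exact hw.ne
  have hxle : ∀ i, x mIdx ≤ x i ∧ x i ≤ x M := by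
    intro i
    rcases mul_pos_iff.mp hwb with ⟨hw, hb⟩ | ⟨hw, hb⟩
    · have hpos : ∀ j, 0 < w * x j + b := fun j => by nlinarith [(hx j).1]
      have h1 := hM i; have h2 := hm i
      rw [abs_of_pos (hpos i), abs_of_pos (hpos M)] at h1
      rw [abs_of_pos (hpos mIdx), abs_of_pos (hpos i)] at h2
      constructor <;> nlinarith
    · have hneg : ∀ j, w * x j + b < 0 := fun j => by
        nlinarith [(hx j).1, mul_nonpos_of_nonpos_of_nonneg hw.le (hx j).1]
      have h1 := hM i; have h2 := hm i
      rw [abs_of_neg (hneg i), abs_of_neg (hneg M)] at h1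
      rw [abs_of_neg (hneg mIdx), abs_of_neg (hneg i)] at h2
      constructor <;> nlinarith
  have hnum : ∀ i, (w * x i + b) - (w * x M + b) = w * (x i - x M) := fun i => by ring
  have hden : ∀ i, (w * x i + b) - (w * x mIdx + b) = w * (x i - x mIdx) := fun i => by ring
  have hlt : ∀ i, w * x i + b ≠ w * x mIdx + b → x mIdx < x i := by
    intro i hne
    rcases lt_or_eq_of_le (hxle i).1 with h | h
    · exact h
    · exact absurd (by rw [← h]) hne
  constructor
  · intro i hne
    rw [hnum i, hden i, mul_div_mul_left _ _ hwne]
    have h1 := hlt i hne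
    have h2 := (hxle i).2
    exact div_nonpos_of_nonpos_of_nonneg (by linarith) (by linarith)
  · have hterm : ∀ i : Fin N, (x i -
        (if w * x i + b ≠ w * x mIdx + b then
          1 / (1 - ((w * x i + b) - (w * x M + b)) / ((w * x i + b) - (w * x mIdx + b)))
        else 0)) ^ 2 ≤ (x M - 1) ^ 2 + (x mIdx) ^ 2 := by
      intro i
      by_cases hne : w * x i + b ≠ w * x mIdx + b
      · rw [if_pos hne]
        have h1 := hlt i hne
        have h2 := (hxle i).2
        have hd1 : x i - x mIdx ≠ 0 := by linarith
        have hd2 : x M - x mIdx ≠ 0 := by linarith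
        have hval : 1 / (1 - ((w * x i + b) - (w * x M + b)) /
            ((w * x i + b) - (w * x mIdx + b))) = (x i - x mIdx) / (x M - x mIdx) := by
          rw [hnum i, hden i, mul_div_mul_left _ _ hwne]
          field_simp
          rw [show x i - x mIdx - (x i - x M) = x M - x mIdx by ring, div_self hd2]
        rw [hval]
        exact key_bound (x mIdx) (x M) (x i) (hx mIdx).1 (hx M).2 h1 h2
      · rw [if_neg hne]
        push_neg at hne
        have hxeq : x i = x mIdx := by
          have : w * (x i - x mIdx) = 0 := by linarith [hne]
          rcases mul_eq_zero.mp this with h | h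
          · exact absurd h hwne
          · linarith
        rw [hxeq]
        nlinarith [sq_nonneg (x M - 1)]
    have hNpos : (0 : ℝ) < N := by exact_mod_cast hN
    have hsum : ∑ i, (x i -
        (if w * x i + b ≠ w * x mIdx + b then
          1 / (1 - ((w * x i + b) - (w * x M + b)) / ((w * x i + b) - (w * x mIdx + b)))
        else 0)) ^ 2 ≤ (N : ℝ) * ((x M - 1) ^ 2 + (x mIdx) ^ 2) := by
      calc _ ≤ ∑ _i : Fin N, ((x M - 1) ^ 2 + (x mIdx) ^ 2) :=
            Finset.sum_le_sum (fun i _ => hterm i)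
        _ = (N : ℝ) * ((x M - 1) ^ 2 + (x mIdx) ^ 2) := by
            rw [Finset.sum_const, Finset.card_univ, Fintype.card_fin, nsmul_eq_mul]
    calc (1 / (N : ℝ)) * ∑ i, (x i -
          (if w * x i + b ≠ w * x mIdx + b then
            1 / (1 - ((w * x i + b) - (w * x M + b)) / ((w * x i + b) - (w * x mIdx + b)))
          else 0)) ^ 2
        ≤ (1 / (N : ℝ)) * ((N : ℝ) * ((x M - 1) ^ 2 + (x mIdx) ^ 2)) :=
          mul_le_mul_of_nonneg_left hsum (by positivity)
      _ = (x M - 1) ^ 2 + (x mIdx) ^ 2 := by field_simp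
end

section
/- Let M ∈ ℝ^{d×d}. Then for every orthonormal matrix H ∈ ℝ^{d×d} (HᵀH = I_d), Tr(H M) ≥ −‖M‖_*, where ‖M‖_* = Tr(√(MᵀM)) is the nuclear norm of M (the sum of its singular values); moreover, if M = U S Vᵀ is a singular value decomposition of M, then H* := −V Uᵀ is orthonormal and achieves equality: Tr(H* M) = −‖M‖_*. Consequently, for a Moore–Penrose pseudoinverse B of A ∈ ℝ^{m×d} and a random vector X with correlation matrix K₀ = E[XXᵀ], the maximum over orthonormal H of E[‖X − HBAX‖²] equals Tr((I_d + BA) K₀) + 2 ‖BA K₀‖_*, attained at H = −VUᵀ for an SVD U S Vᵀ of BA K₀. -/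
open MeasureTheory Matrix

/-- The positive semidefinite square root, as `Matrix.PosSemidef.sqrt` was defined in
Mathlib (December 2024); it has since been removed from Mathlib. -/
noncomputable def Matrix.PosSemidef.sqrt {n 𝕜 : Type*} [Fintype n] [RCLike 𝕜] [PartialOrder 𝕜]
    [StarOrderedRing 𝕜] [DecidableEq n]
    {A : Matrix n n 𝕜} (hA : A.PosSemidef) : Matrix n n 𝕜 :=
  hA.1.eigenvectorUnitary.1 * diagonal ((↑) ∘ (√·) ∘ hA.1.eigenvalues) *
  (star hA.1.eigenvectorUnitary : Matrix n n 𝕜)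

/-- The nuclear norm `‖M‖_* = Tr(√(MᴴM))` of a real square matrix (the sum of its
singular values); over `ℝ`, `Mᴴ = Mᵀ`. -/
noncomputable def nuclearNorm {d : ℕ} (M : Matrix (Fin d) (Fin d) ℝ) : ℝ :=
  (Matrix.posSemidef_conjTranspose_mul_self M).sqrt.trace

lemma nuclearNorm_svd {d : ℕ} (U V : Matrix (Fin d) (Fin d) ℝ) (s : Fin d → ℝ)
    (hU : Uᵀ * U = 1) (hV : Vᵀ * V = 1) (hs : ∀ i, 0 ≤ s i) :
    nuclearNorm (U * Matrix.diagonal s * Vᵀ) = ∑ i, s i := by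
  set M := U * Matrix.diagonal s * Vᵀ with hM
  have hpsd : (V * Matrix.diagonal s * Vᵀ).PosSemidef := by
    have h := posSemidef_self_mul_conjTranspose (V * Matrix.diagonal (fun i => Real.sqrt (s i)))
    have e : (V * Matrix.diagonal (fun i => Real.sqrt (s i))) *
        (V * Matrix.diagonal (fun i => Real.sqrt (s i)))ᴴ = V * Matrix.diagonal s * Vᵀ := by
      rw [conjTranspose_eq_transpose_of_trivial, transpose_mul, diagonal_transpose,
        mul_assoc, ← mul_assoc (Matrix.diagonal _), diagonal_mul_diagonal]
      rw [show (fun i => Real.sqrt (s i) * Real.sqrt (s i)) = s from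
        funext fun i => Real.mul_self_sqrt (hs i), mul_assoc]
    rwa [e] at h
  have hsq : (V * Matrix.diagonal s * Vᵀ) ^ 2 = Mᴴ * M := by
    rw [conjTranspose_eq_transpose_of_trivial, hM, pow_two]
    simp only [transpose_mul, diagonal_transpose, transpose_transpose, mul_assoc]
    rw [← mul_assoc Vᵀ V, hV, one_mul, ← mul_assoc Uᵀ U, hU, one_mul]
  have hPeq : V * Matrix.diagonal s * Vᵀ = (posSemidef_conjTranspose_mul_self M).sqrt := by
    open scoped MatrixOrder in
    have h := (CFC.sqrt_eq_iff (Mᴴ * M) (V * Matrix.diagonal s * Vᵀ)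
      (posSemidef_conjTranspose_mul_self M).nonneg hpsd.nonneg).mpr (by rw [← sq, hsq])
    open scoped MatrixOrder in
    rw [← h, CFC.sqrt_eq_cfc, cfc_nnreal_eq_real _ (Mᴴ * M) (posSemidef_conjTranspose_mul_self M).nonneg,
      (posSemidef_conjTranspose_mul_self M).1.cfc_eq]
    simp only [IsHermitian.cfc, Unitary.conjStarAlgAut_apply, Matrix.PosSemidef.sqrt]
    have hmx : ((fun x => √(max x 0)) ∘ (posSemidef_conjTranspose_mul_self M).1.eigenvalues) =
        ((fun x : ℝ => √x) ∘ (posSemidef_conjTranspose_mul_self M).1.eigenvalues) :=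
      funext fun i => by
        simp only [Function.comp_apply,
          max_eq_left ((posSemidef_conjTranspose_mul_self M).eigenvalues_nonneg i)]
    simp only [Real.coe_sqrt, Real.coe_toNNReal', hmx]
  rw [nuclearNorm, ← hPeq, trace_mul_cycle, hV, one_mul, trace_diagonal]

lemma trace_ge_neg_nuclearNorm {d : ℕ} (M H : Matrix (Fin d) (Fin d) ℝ)
    (hH : Hᵀ * H = 1) : -(nuclearNorm M) ≤ Matrix.trace (H * M) := by
  have hN : (Mᴴ * M).PosSemidef := posSemidef_conjTranspose_mul_self M
  have hHerm : (Mᴴ * M).IsHermitian := hN.1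
  set W : Matrix (Fin d) (Fin d) ℝ := (hHerm.eigenvectorUnitary : Matrix (Fin d) (Fin d) ℝ)
    with hWdef
  have hWsW : star W * W = 1 := mem_unitaryGroup_iff'.mp hHerm.eigenvectorUnitary.2
  have hWWs : W * star W = 1 := mem_unitaryGroup_iff.mp hHerm.eigenvectorUnitary.2
  have hnuc : nuclearNorm M = ∑ i, Real.sqrt (hHerm.eigenvalues i) := by
    have e : nuclearNorm M = Matrix.trace ((hHerm.eigenvectorUnitary : Matrix (Fin d) (Fin d) ℝ) *
        Matrix.diagonal ((RCLike.ofReal : ℝ → ℝ) ∘ Real.sqrt ∘ hHerm.eigenvalues) *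
        (star hHerm.eigenvectorUnitary : Matrix (Fin d) (Fin d) ℝ)) := rfl
    rw [e, trace_mul_cycle, Unitary.coe_star_mul_self, one_mul, trace_diagonal]
    simp [RCLike.ofReal_real_eq_id]
  have key : ∀ (Z : Matrix (Fin d) (Fin d) ℝ) (i : Fin d), (star W * Z * W) i i =
      (⇑(hHerm.eigenvectorBasis i)) ⬝ᵥ (Z *ᵥ ⇑(hHerm.eigenvectorBasis i)) := by
    intro Z i
    simp only [mul_apply, Matrix.star_eq_conjTranspose, conjTranspose_apply, star_trivial,
      dotProduct, mulVec, Finset.sum_mul, Finset.mul_sum, hWdef,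
      Matrix.IsHermitian.eigenvectorUnitary_apply]
    rw [Finset.sum_comm]
    exact Finset.sum_congr rfl fun j _ => Finset.sum_congr rfl fun k _ => by ring
  have htr : Matrix.trace (H * M) =
      ∑ i, (⇑(hHerm.eigenvectorBasis i)) ⬝ᵥ ((H * M) *ᵥ ⇑(hHerm.eigenvectorBasis i)) := by
    have hrw : Matrix.trace (H * M) = Matrix.trace (star W * (H * M) * W) := by
      rw [trace_mul_cycle, hWWs, one_mul]
    rw [hrw, Matrix.trace]
    exact Finset.sum_congr rfl fun i _ => key (H * M) i
  rw [hnuc, htr, ← Finset.sum_neg_distrib]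
  refine Finset.sum_le_sum fun i _ => ?_
  set w : Fin d → ℝ := ⇑(hHerm.eigenvectorBasis i) with hw
  have hw1 : w ⬝ᵥ w = 1 := by
    have h1 : (star W * W) i i = (1 : Matrix (Fin d) (Fin d) ℝ) i i := by rw [hWsW]
    rw [Matrix.one_apply_eq] at h1
    rw [← h1]
    simp only [mul_apply, Matrix.star_eq_conjTranspose, conjTranspose_apply, star_trivial,
      dotProduct, hWdef, Matrix.IsHermitian.eigenvectorUnitary_apply]
    rfl
  have hyy : (M *ᵥ w) ⬝ᵥ (M *ᵥ w) = hHerm.eigenvalues i := by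
    have e : (M *ᵥ w) ⬝ᵥ (M *ᵥ w) = w ⬝ᵥ ((Mᴴ * M) *ᵥ w) := by
      rw [conjTranspose_eq_transpose_of_trivial, ← mulVec_mulVec, dotProduct_mulVec w,
        vecMul_transpose, dotProduct_comm]
    rw [e, hw, hHerm.mulVec_eigenvectorBasis, ← hw, dotProduct_smul, smul_eq_mul, hw1, mul_one]
  have huu : ((H * M) *ᵥ w) ⬝ᵥ ((H * M) *ᵥ w) = hHerm.eigenvalues i := by
    rw [← mulVec_mulVec, dotProduct_mulVec, ← mulVec_transpose, mulVec_mulVec, hH, one_mulVec,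
      hyy]
  have hcs : (w ⬝ᵥ ((H * M) *ᵥ w)) ^ 2 ≤ hHerm.eigenvalues i := by
    have cs := Finset.sum_mul_sq_le_sq_mul_sq Finset.univ w ((H * M) *ᵥ w)
    have e1 : ∑ j, w j ^ 2 = w ⬝ᵥ w := by simp [dotProduct, sq]
    have e2 : ∑ j, ((H * M) *ᵥ w) j ^ 2 = ((H * M) *ᵥ w) ⬝ᵥ ((H * M) *ᵥ w) := by
      simp [dotProduct, sq]
    rw [e1, e2, hw1, huu, one_mul] at cs
    exact cs
  have habs : |w ⬝ᵥ ((H * M) *ᵥ w)| ≤ Real.sqrt (hHerm.eigenvalues i) :=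
    Real.abs_le_sqrt hcs
  linarith [neg_abs_le (w ⬝ᵥ ((H * M) *ᵥ w))]

lemma integral_sq_mulVec {d : ℕ} {Ω : Type*} [MeasureSpace Ω]
    [IsProbabilityMeasure (volume : Measure Ω)]
    (X : Ω → Fin d → ℝ) (hL2 : ∀ i, MemLp (fun ω => X ω i) 2)
    (D : Matrix (Fin d) (Fin d) ℝ) :
    (∫ ω, ∑ i, ((D *ᵥ X ω) i) ^ 2) = ∑ j, ∑ k, (Dᵀ * D) j k * ∫ ω, X ω j * X ω k := by
  have hint : ∀ j k : Fin d, Integrable (fun ω => X ω j * X ω k) := by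
    intro j k
    have h : MemLp ((fun ω => X ω j) • (fun ω => X ω k)) 1 (volume : Measure Ω) :=
      (hL2 k).smul (hL2 j) (hpqr := ⟨by simp [ENNReal.inv_two_add_inv_two]⟩)
    have he : ((fun ω => X ω j) • (fun ω => X ω k)) = fun ω => X ω j * X ω k :=
      funext fun ω => rfl
    rw [he] at h
    exact memLp_one_iff_integrable.mp h
  have hpt : ∀ x : Fin d → ℝ,
      (∑ i, ((D *ᵥ x) i) ^ 2) = ∑ j, ∑ k, (Dᵀ * D) j k * (x j * x k) := by
    intro x
    have e1 : ∀ i, ((D *ᵥ x) i) ^ 2 = ∑ j, ∑ k, (D i j * x j) * (D i k * x k) := by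
      intro i; rw [sq]; simp [mulVec, dotProduct, Finset.sum_mul_sum]
    simp_rw [e1]
    rw [Finset.sum_comm]
    refine Finset.sum_congr rfl fun j _ => ?_
    rw [Finset.sum_comm]
    refine Finset.sum_congr rfl fun k _ => ?_
    rw [mul_apply, Finset.sum_mul]
    exact Finset.sum_congr rfl fun i _ => by simp only [transpose_apply]; ring
  simp_rw [hpt]
  refine (integral_finset_sum _ (fun j _ =>
    integrable_finset_sum _ (fun k _ => (hint j k).const_mul _))).trans ?_
  refine Finset.sum_congr rfl fun j _ => ?_
  refine (integral_finset_sum _ (fun k _ => (hint j k).const_mul _)).trans ?_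
  exact Finset.sum_congr rfl fun k _ => integral_const_mul _ _

/-- For every orthonormal `H`, `Tr(HM) ≥ −‖M‖_*`, with equality at `H* = −VUᵀ` for an
SVD `M = USVᵀ`. Consequently, the maximum over orthonormal `H` of the post-PPS
least-squares MSE `E‖X − HBAX‖²` equals `Tr((I + BA)K₀) + 2‖BAK₀‖_*`, attained at
`H = −VUᵀ` for an SVD `USVᵀ` of `BAK₀`. -/
theorem pps_optimal_orthonormal_transform
    {m d : ℕ} (A : Matrix (Fin m) (Fin d) ℝ) (B : Matrix (Fin d) (Fin m) ℝ)
    (h1 : A * B * A = A) (h2 : B * A * B = B)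
    (h3 : (A * B)ᵀ = A * B) (h4 : (B * A)ᵀ = B * A)
    {Ω : Type*} [MeasureSpace Ω] [IsProbabilityMeasure (volume : Measure Ω)]
    (X : Ω → Fin d → ℝ) (hXmeas : Measurable X)
    (hL2 : ∀ i, MemLp (fun ω => X ω i) 2)
    (K₀ : Matrix (Fin d) (Fin d) ℝ)
    (hK₀ : K₀ = Matrix.of fun i j => ∫ ω, X ω i * X ω j) :
    (∀ M : Matrix (Fin d) (Fin d) ℝ,
        (∀ H : Matrix (Fin d) (Fin d) ℝ, Hᵀ * H = 1 →
          -(nuclearNorm M) ≤ Matrix.trace (H * M)) ∧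
        (∀ (U V : Matrix (Fin d) (Fin d) ℝ) (s : Fin d → ℝ),
          Uᵀ * U = 1 → Vᵀ * V = 1 → (∀ i, 0 ≤ s i) →
          M = U * Matrix.diagonal s * Vᵀ →
            (-(V * Uᵀ))ᵀ * (-(V * Uᵀ)) = 1 ∧
            Matrix.trace ((-(V * Uᵀ)) * M) = -(nuclearNorm M))) ∧
      (∀ H : Matrix (Fin d) (Fin d) ℝ, Hᵀ * H = 1 →
        (∫ ω, ∑ i, (X ω i - ((H * (B * A)) *ᵥ X ω) i) ^ 2) ≤
          Matrix.trace ((1 + B * A) * K₀) + 2 * nuclearNorm (B * A * K₀)) ∧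
      ∀ (U V : Matrix (Fin d) (Fin d) ℝ) (s : Fin d → ℝ),
        Uᵀ * U = 1 → Vᵀ * V = 1 → (∀ i, 0 ≤ s i) →
        B * A * K₀ = U * Matrix.diagonal s * Vᵀ →
          (∫ ω, ∑ i, (X ω i - (((-(V * Uᵀ)) * (B * A)) *ᵥ X ω) i) ^ 2) =
            Matrix.trace ((1 + B * A) * K₀) + 2 * nuclearNorm (B * A * K₀) := by
  -- basic facts
  have hidem : (B * A) * (B * A) = B * A := by
    rw [Matrix.mul_assoc B A (B * A), ← Matrix.mul_assoc A B A, h1]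
  have hK₀sym : K₀ᵀ = K₀ := by
    rw [hK₀]
    ext i j
    simp only [transpose_apply, Matrix.of_apply]
    exact congrArg _ (funext fun ω => mul_comm _ _)
  have hsym' : ∀ j k : Fin d, K₀ k j = K₀ j k := by
    intro j k
    conv_rhs => rw [← hK₀sym]
    rfl
  -- SVD equality bits, for a general M
  have hsvd : ∀ (M U V : Matrix (Fin d) (Fin d) ℝ) (s : Fin d → ℝ),
      Uᵀ * U = 1 → Vᵀ * V = 1 → (∀ i, 0 ≤ s i) →
      M = U * Matrix.diagonal s * Vᵀ →
        (-(V * Uᵀ))ᵀ * (-(V * Uᵀ)) = 1 ∧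
        Matrix.trace ((-(V * Uᵀ)) * M) = -(nuclearNorm M) := by
    intro M U V s hU hV hs hMeq
    constructor
    · rw [transpose_neg, neg_mul_neg, transpose_mul, transpose_transpose,
        mul_assoc, ← mul_assoc Vᵀ, hV, one_mul, mul_eq_one_comm.mp hU]
    · rw [hMeq, nuclearNorm_svd U V s hU hV hs, neg_mul, trace_neg, neg_inj]
      have e : V * Uᵀ * (U * Matrix.diagonal s * Vᵀ) = V * (Matrix.diagonal s * Vᵀ) := by
        simp only [mul_assoc]
        rw [← mul_assoc Uᵀ U, hU, one_mul]
      rw [e, trace_mul_comm, mul_assoc, hV, mul_one, trace_diagonal]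
  -- the MSE identity
  have hmse : ∀ G : Matrix (Fin d) (Fin d) ℝ, Gᵀ * G = 1 →
      (∫ ω, ∑ i, (X ω i - ((G * (B * A)) *ᵥ X ω) i) ^ 2) =
        Matrix.trace ((1 + B * A) * K₀) - 2 * Matrix.trace (G * (B * A * K₀)) := by
    intro G hG
    have hpt : ∀ ω, (∑ i, (X ω i - ((G * (B * A)) *ᵥ X ω) i) ^ 2) =
        ∑ i, (((1 - G * (B * A)) *ᵥ X ω) i) ^ 2 := by
      intro ω
      refine Finset.sum_congr rfl fun i _ => ?_
      rw [sub_mulVec, one_mulVec]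
      rfl
    simp_rw [hpt]
    rw [integral_sq_mulVec X hL2 (1 - G * (B * A))]
    have hKe : ∀ j k : Fin d, (∫ ω, X ω j * X ω k) = K₀ j k := by
      intro j k; rw [hK₀]; rfl
    simp_rw [hKe]
    have htrP : ∀ P : Matrix (Fin d) (Fin d) ℝ,
        (∑ j, ∑ k, P j k * K₀ j k) = Matrix.trace (P * K₀) := by
      intro P
      rw [Matrix.trace]
      refine Finset.sum_congr rfl fun j _ => ?_
      rw [Matrix.diag_apply, mul_apply]
      exact Finset.sum_congr rfl fun k _ => by rw [hsym' j k]
    rw [htrP]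
    have hDD : (1 - G * (B * A))ᵀ * (1 - G * (B * A)) =
        1 + B * A - G * (B * A) - (B * A)ᵀ * Gᵀ := by
      have h5 : (B * A)ᵀ * Gᵀ * (G * (B * A)) = B * A := by
        rw [h4, mul_assoc, ← mul_assoc Gᵀ, hG, one_mul, hidem]
      rw [transpose_sub, transpose_one, transpose_mul, sub_mul, one_mul, mul_sub, mul_one, h5]
      abel
    rw [hDD]
    have htr2 : Matrix.trace ((B * A)ᵀ * Gᵀ * K₀) = Matrix.trace (G * (B * A * K₀)) := by
      rw [← trace_transpose ((B * A)ᵀ * Gᵀ * K₀), transpose_mul, transpose_mul,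
        transpose_transpose, transpose_transpose, hK₀sym, trace_mul_comm]
      simp only [mul_assoc]
    rw [Matrix.sub_mul, Matrix.sub_mul, trace_sub, trace_sub, htr2, mul_assoc G]
    ring
  refine ⟨fun M => ⟨fun H hH => trace_ge_neg_nuclearNorm M H hH,
      fun U V s hU hV hs hMeq => hsvd M U V s hU hV hs hMeq⟩, ?_, ?_⟩
  · intro H hH
    rw [hmse H hH]
    have hb := trace_ge_neg_nuclearNorm (B * A * K₀) H hH
    linarith
  · intro U V s hU hV hs hdec
    obtain ⟨horth, htr⟩ := hsvd (B * A * K₀) U V s hU hV hs hdec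
    rw [hmse (-(V * Uᵀ)) horth, htr]
    ring
end

section
/- Let A ∈ ℝ^{m×d}, let B ∈ ℝ^{d×m} be a Moore–Penrose pseudoinverse of A, and let J ∈ ℝ^{m×k}. Let X (ℝ^d-valued) and n (ℝ^k-valued) be random vectors on a common probability space with E[‖X‖²] < ∞ and E[‖n‖²] < ∞ (no independence between X and n is required). Then E[ ‖X − B(AX + Jn)‖² ] = Tr( (I_d − BA) E[XXᵀ] ) + Tr( B J E[nnᵀ] Jᵀ Bᵀ ); in particular, the cross term vanishes identically because (I_d − BA) B = 0, and the adversary's MSE under noisy confidence scores decomposes as the noiseless MSE plus the nonnegative noise term Tr(BJ S Jᵀ Bᵀ), where S = E[nnᵀ]. -/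
open MeasureTheory Matrix

/-- Under noisy confidence scores, the adversary's least-squares estimate is
`X̂ = B(AX + Jn)`, the cross term vanishes because `(I − BA)B = 0`, and the MSE
decomposes as `E‖X − B(AX + Jn)‖² = Tr((I − BA)K₀) + Tr(BJSJᵀBᵀ)` where
`K₀ = E[XXᵀ]` and `S = E[nnᵀ]` (no independence between `X` and `n` required). -/
theorem mse_with_additive_noise
    {m d k : ℕ} (A : Matrix (Fin m) (Fin d) ℝ) (B : Matrix (Fin d) (Fin m) ℝ)
    (h1 : A * B * A = A) (h2 : B * A * B = B)
    (h3 : (A * B)ᵀ = A * B) (h4 : (B * A)ᵀ = B * A)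
    (J : Matrix (Fin m) (Fin k) ℝ)
    {Ω : Type*} [MeasureSpace Ω] [IsProbabilityMeasure (volume : Measure Ω)]
    (X : Ω → Fin d → ℝ) (nse : Ω → Fin k → ℝ)
    (hXmeas : Measurable X) (hnmeas : Measurable nse)
    (hXL2 : ∀ i, MemLp (fun ω => X ω i) 2)
    (hnL2 : ∀ i, MemLp (fun ω => nse ω i) 2)
    (K₀ : Matrix (Fin d) (Fin d) ℝ)
    (hK₀ : K₀ = Matrix.of fun i j => ∫ ω, X ω i * X ω j)
    (S : Matrix (Fin k) (Fin k) ℝ)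
    (hS : S = Matrix.of fun i j => ∫ ω, nse ω i * nse ω j) :
    (1 - B * A) * B = 0 ∧
      (∫ ω, ∑ i, (X ω i - (B *ᵥ (A *ᵥ X ω + J *ᵥ nse ω)) i) ^ 2) =
        Matrix.trace ((1 - B * A) * K₀) + Matrix.trace (B * J * S * Jᵀ * Bᵀ) := by
  set M : Matrix (Fin d) (Fin d) ℝ := 1 - B * A with hM
  set N : Matrix (Fin d) (Fin k) ℝ := B * J with hN
  have hMB : M * B = 0 := by
    rw [hM, Matrix.sub_mul, Matrix.one_mul, h2, sub_self]
  refine ⟨hMB, ?_⟩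
  -- algebraic facts
  have hMsymm : Mᵀ = M := by rw [hM, transpose_sub, transpose_one, h4]
  have hMidem : M * M = M := by
    have hBA : (B * A) * (B * A) = B * A := by
      rw [← Matrix.mul_assoc, h2]
    rw [hM, Matrix.sub_mul, Matrix.mul_sub, Matrix.mul_sub, Matrix.one_mul,
      Matrix.mul_one, hBA, sub_self, sub_zero, Matrix.one_mul]
  have hMN : Mᵀ * N = 0 := by
    rw [hMsymm, hN, ← Matrix.mul_assoc, hMB, Matrix.zero_mul]
  set Q : Matrix (Fin k) (Fin k) ℝ := Nᵀ * N with hQ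
  -- integrability of products
  have hXX : ∀ i j, Integrable (fun ω => X ω i * X ω j) := by
    intro i j
    have h := (hXL2 j).smul (hXL2 i) (r := 1)
    exact memLp_one_iff_integrable.mp h
  have hnn : ∀ i j, Integrable (fun ω => nse ω i * nse ω j) := by
    intro i j
    have h := (hnL2 j).smul (hnL2 i) (r := 1)
    exact memLp_one_iff_integrable.mp h
  -- pointwise identity
  have hpt : ∀ ω, (∑ i, (X ω i - (B *ᵥ (A *ᵥ X ω + J *ᵥ nse ω)) i) ^ 2) =
      (∑ i, ∑ j, M i j * (X ω i * X ω j)) +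
      (∑ i, ∑ j, Q i j * (nse ω i * nse ω j)) := by
    intro ω
    set x := X ω with hx
    set n := nse ω with hn
    have hvec : ∀ i, x i - (B *ᵥ (A *ᵥ x + J *ᵥ n)) i =
        (M *ᵥ x - N *ᵥ n) i := by
      intro i
      simp only [hM, hN, mulVec_add, mulVec_mulVec, sub_mulVec, one_mulVec,
        Pi.sub_apply, Pi.add_apply]
      ring
    have hsq : (∑ i, (x i - (B *ᵥ (A *ᵥ x + J *ᵥ n)) i) ^ 2) =
        (M *ᵥ x - N *ᵥ n) ⬝ᵥ (M *ᵥ x - N *ᵥ n) := by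
      simp only [hvec, dotProduct, sq]
    have key : ∀ (p q : ℕ) (P : Matrix (Fin d) (Fin p) ℝ)
        (R : Matrix (Fin d) (Fin q) ℝ) (u : Fin p → ℝ) (v : Fin q → ℝ),
        (P *ᵥ u) ⬝ᵥ (R *ᵥ v) = ∑ i, ∑ j, (Pᵀ * R) i j * (u i * v j) := by
      intro p q P R u v
      rw [← transpose_transpose P, mulVec_transpose, dotProduct_mulVec,
        vecMul_vecMul, transpose_transpose]
      simp only [vecMul, dotProduct, Finset.sum_mul]
      rw [Finset.sum_comm]
      exact Finset.sum_congr rfl fun i _ => Finset.sum_congr rfl fun j _ => by ring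
    have hcross : (M *ᵥ x) ⬝ᵥ (N *ᵥ n) = 0 := by
      rw [key]; simp [hMN]
    have hxx : (M *ᵥ x) ⬝ᵥ (M *ᵥ x) = ∑ i, ∑ j, M i j * (x i * x j) := by
      rw [key]
      rw [hMsymm, hMidem]
    have hnn' : (N *ᵥ n) ⬝ᵥ (N *ᵥ n) = ∑ i, ∑ j, Q i j * (n i * n j) := by
      rw [key, ← hQ]
    rw [hsq, sub_dotProduct, dotProduct_sub, dotProduct_sub, hcross,
      dotProduct_comm (N *ᵥ n) (M *ᵥ x), hcross, hxx, hnn']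
    ring
  -- integrate
  have hint1 : Integrable (fun ω => ∑ i, ∑ j, M i j * (X ω i * X ω j)) :=
    integrable_finset_sum _ fun i _ => integrable_finset_sum _ fun j _ =>
      (hXX i j).const_mul _
  have hint2 : Integrable (fun ω => ∑ i, ∑ j, Q i j * (nse ω i * nse ω j)) :=
    integrable_finset_sum _ fun i _ => integrable_finset_sum _ fun j _ =>
      (hnn i j).const_mul _
  have hI : (∫ ω, ∑ i, (X ω i - (B *ᵥ (A *ᵥ X ω + J *ᵥ nse ω)) i) ^ 2) =
      (∑ i, ∑ j, M i j * ∫ ω, X ω i * X ω j) +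
      (∑ i, ∑ j, Q i j * ∫ ω, nse ω i * nse ω j) := by
    rw [integral_congr_ae (Filter.Eventually.of_forall hpt), integral_add hint1 hint2,
      integral_finset_sum _ (f := fun i ω => ∑ j, M i j * (X ω i * X ω j)) fun i _ => integrable_finset_sum _
        fun j _ => (hXX i j).const_mul _,
      integral_finset_sum _ (f := fun i ω => ∑ j, Q i j * (nse ω i * nse ω j)) fun i _ => integrable_finset_sum _
        fun j _ => (hnn i j).const_mul _]
    congr 1
    · refine Finset.sum_congr rfl fun i _ => ?_
      rw [integral_finset_sum _ fun j _ => (hXX i j).const_mul _]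
      exact Finset.sum_congr rfl fun j _ => integral_const_mul _ _
    · refine Finset.sum_congr rfl fun i _ => ?_
      rw [integral_finset_sum _ fun j _ => (hnn i j).const_mul _]
      exact Finset.sum_congr rfl fun j _ => integral_const_mul _ _
  rw [hI]
  -- identify traces
  have hT1 : (∑ i, ∑ j, M i j * ∫ ω, X ω i * X ω j) = Matrix.trace (M * K₀) := by
    simp only [Matrix.trace, Matrix.diag, Matrix.mul_apply, hK₀, Matrix.of_apply]
    refine Finset.sum_congr rfl fun i _ => Finset.sum_congr rfl fun j _ => ?_
    congr 1
    exact integral_congr_ae (Filter.Eventually.of_forall fun ω => mul_comm _ _)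
  have hT2 : (∑ i, ∑ j, Q i j * ∫ ω, nse ω i * nse ω j) =
      Matrix.trace (B * J * S * Jᵀ * Bᵀ) := by
    have : B * J * S * Jᵀ * Bᵀ = (N * S) * Nᵀ := by
      rw [hN, transpose_mul, Matrix.mul_assoc]
    rw [this, Matrix.trace_mul_comm, ← Matrix.mul_assoc, ← hQ]
    simp only [Matrix.trace, Matrix.diag, Matrix.mul_apply, hS, Matrix.of_apply]
    refine Finset.sum_congr rfl fun i _ => Finset.sum_congr rfl fun j _ => ?_
    congr 1
    exact integral_congr_ae (Filter.Eventually.of_forall fun ω => mul_comm _ _)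
  rw [hT1, hT2]
end
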